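/- In the chord-space model, the left and right boundary operators commute: H_{L,i} ∘ H_{R,j} = H_{R,j} ∘ H_{L,i} for all i, j ∈ {0,1}, where H_{R,i} = a_{R,i} + a†_{R,i} and H_{L,i} = a_{L,i} + a†_{L,i}. -/

import Mathlib

namespace DSSYK

/-- Binary strings (chord words); the letter `0` is `false`, the letter `1` is `true`. -/
abbrev Str : Type := List Bool

/-- The chord space: finitely supported complex functions on binary strings. -/
abbrev Sp : Type := Str →₀ ℂ

/-- Crossing weights: `Q 0 0 = q`, `Q 1 1 = q_m`, mixed crossings give `r`. -/
def Qmat (q qm r : ℝ) : Bool → Bool → ℂ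
  | false, false => (q : ℂ)
  | true,  true  => (qm : ℂ)
  | _,     _     => (r : ℂ)

/-- Right creation `a†_{R,i}`: append the letter `i` on the right. -/
noncomputable def creR (i : Bool) : Sp →ₗ[ℂ] Sp :=
  Finsupp.lift Sp ℂ Str fun w => Finsupp.single (w ++ [i]) 1

/-- Value of the right annihilation operator on a basis string: delete one letter
equal to `i`, weighted by the crossing factors with all letters to its right. -/
noncomputable def annVecR (Q : Bool → Bool → ℂ) (i : Bool) : Str → Sp
  | [] => 0
  | x :: t =>
      (if x = i then ((t.map (Q i)).prod) • Finsupp.single t (1 : ℂ) else 0)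
        + Finsupp.mapDomain (List.cons x) (annVecR Q i t)

/-- Right annihilation `a_{R,i}`. -/
noncomputable def annR (Q : Bool → Bool → ℂ) (i : Bool) : Sp →ₗ[ℂ] Sp :=
  Finsupp.lift Sp ℂ Str (annVecR Q i)

/-- Left creation `a†_{L,i}`: prepend the letter `i`. -/
noncomputable def creL (i : Bool) : Sp →ₗ[ℂ] Sp :=
  Finsupp.lift Sp ℂ Str fun w => Finsupp.single (i :: w) 1

/-- Value of the left annihilation operator on a basis string: delete one letter
equal to `i`, weighted by the crossing factors with all letters to its left. -/
noncomputable def annVecL (Q : Bool → Bool → ℂ) (i : Bool) : Str → Sp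
  | [] => 0
  | x :: t =>
      (if x = i then Finsupp.single t (1 : ℂ) else 0)
        + Q i x • Finsupp.mapDomain (List.cons x) (annVecL Q i t)

/-- Left annihilation `a_{L,i}`. -/
noncomputable def annL (Q : Bool → Bool → ℂ) (i : Bool) : Sp →ₗ[ℂ] Sp :=
  Finsupp.lift Sp ℂ Str (annVecL Q i)

/-- Diagonal weight operator `δ_w ↦ c₀^{N₀(w)} · c₁^{N₁(w)} · δ_w`, where `N₀, N₁`
count the `0`'s and `1`'s in `w`. -/
noncomputable def Wgen (c₀ c₁ : ℂ) : Sp →ₗ[ℂ] Sp :=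
  Finsupp.lift Sp ℂ Str fun w =>
    Finsupp.single w (c₀ ^ (w.count false) * c₁ ^ (w.count true))

/-- The chord-counting weight operator `W δ_w = q^{N₀(w)} r^{N₁(w)} δ_w`. -/
noncomputable def Wop (q r : ℝ) : Sp →ₗ[ℂ] Sp := Wgen (q : ℂ) (r : ℂ)

/-- Right boundary operators `H_{R,i} = a_{R,i} + a†_{R,i}`. -/
noncomputable def HR (Q : Bool → Bool → ℂ) (i : Bool) : Sp →ₗ[ℂ] Sp := annR Q i + creR i

/-- Left boundary operators `H_{L,i} = a_{L,i} + a†_{L,i}`. -/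
noncomputable def HL (Q : Bool → Bool → ℂ) (i : Bool) : Sp →ₗ[ℂ] Sp := annL Q i + creL i

/-- The vacuum `ω = δ_{[]}` (the empty string). -/
noncomputable def vac : Sp := Finsupp.single [] 1

/-- `ε v = v([])`, the coefficient of the empty string. -/
def eps (v : Sp) : ℂ := v []

end DSSYK


namespace DSSYK

section Aux

variable (Q : Bool → Bool → ℂ)

@[simp] lemma lift_single' (f : Str → Sp) (w : Str) (c : ℂ) :
    Finsupp.lift Sp ℂ Str f (Finsupp.single w c) = c • f w := by
  simp [Finsupp.lift_apply, Finsupp.sum_single_index]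

lemma prod_count (f : Bool → ℂ) (t : Str) :
    (t.map f).prod = f false ^ t.count false * f true ^ t.count true := by
  induction t with
  | nil => simp
  | cons x t ih => cases x <;> simp [List.count_cons, ih, pow_succ] <;> ring

lemma annL_single (i : Bool) (w : Str) (c : ℂ) :
    annL Q i (Finsupp.single w c) = c • annVecL Q i w := by simp [annL]

lemma annR_single (i : Bool) (w : Str) (c : ℂ) :
    annR Q i (Finsupp.single w c) = c • annVecR Q i w := by simp [annR]

lemma Wgen_single (c₀ c₁ : ℂ) (w : Str) (c : ℂ) :
    Wgen c₀ c₁ (Finsupp.single w c)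
      = (c₀ ^ (w.count false) * c₁ ^ (w.count true)) • Finsupp.single w c := by
  rw [Wgen, lift_single', Finsupp.smul_single', Finsupp.smul_single', mul_comm]

lemma creL_eq (i : Bool) (v : Sp) :
    creL i v = Finsupp.mapDomain (List.cons i) v := by
  induction v using Finsupp.induction_linear with
  | zero => simp
  | add f g hf hg => simp [Finsupp.mapDomain_add, hf, hg]
  | single a b => simp [creL, Finsupp.mapDomain_single, Finsupp.smul_single]

lemma creR_eq (j : Bool) (v : Sp) :
    creR j v = Finsupp.mapDomain (fun w => w ++ [j]) v := by
  induction v using Finsupp.induction_linear with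
  | zero => simp
  | add f g hf hg => simp [Finsupp.mapDomain_add, hf, hg]
  | single a b => simp [creR, Finsupp.mapDomain_single, Finsupp.smul_single]

lemma mapDomain_comm (x j : Bool) (v : Sp) :
    Finsupp.mapDomain (List.cons x) (Finsupp.mapDomain (fun w => w ++ [j]) v)
      = Finsupp.mapDomain (fun w => w ++ [j]) (Finsupp.mapDomain (List.cons x) v) := by
  rw [← Finsupp.mapDomain_comp, ← Finsupp.mapDomain_comp]
  rfl

lemma annL_mapDomain (i x : Bool) (v : Sp) :
    annL Q i (Finsupp.mapDomain (List.cons x) v)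
      = (if x = i then v else 0)
        + Q i x • Finsupp.mapDomain (List.cons x) (annL Q i v) := by
  induction v using Finsupp.induction_linear with
  | zero => simp
  | add f g hf hg =>
      simp only [Finsupp.mapDomain_add, map_add, hf, hg, smul_add]
      split_ifs <;> abel
  | single a b =>
      simp only [Finsupp.mapDomain_single, annL, lift_single', annVecL]
      rw [Finsupp.mapDomain_smul]
      split_ifs <;> simp [smul_add, smul_smul, mul_comm]

lemma annR_mapDomain (j x : Bool) (v : Sp) :
    annR Q j (Finsupp.mapDomain (List.cons x) v)
      = (if x = j then Wgen (Q j false) (Q j true) v else 0)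
        + Finsupp.mapDomain (List.cons x) (annR Q j v) := by
  induction v using Finsupp.induction_linear with
  | zero => simp
  | add f g hf hg =>
      simp only [Finsupp.mapDomain_add, map_add, hf, hg]
      split_ifs <;> abel
  | single a b =>
      rw [Finsupp.mapDomain_single]
      rw [annR_single, annR_single, annVecR, Wgen_single, prod_count,
        Finsupp.mapDomain_smul]
      split_ifs with h
      · rw [smul_add, smul_comm b, Finsupp.smul_single', mul_one]
      · simp

lemma Wgen_mapDomain (c₀ c₁ : ℂ) (x : Bool) (v : Sp) :
    Wgen c₀ c₁ (Finsupp.mapDomain (List.cons x) v)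
      = (cond x c₁ c₀) • Finsupp.mapDomain (List.cons x) (Wgen c₀ c₁ v) := by
  induction v using Finsupp.induction_linear with
  | zero => simp
  | add f g hf hg => simp only [Finsupp.mapDomain_add, map_add, hf, hg, smul_add]
  | single a b =>
      rw [Finsupp.mapDomain_single, Wgen_single, Wgen_single, Finsupp.mapDomain_smul,
        Finsupp.mapDomain_single]
      have : ∀ c d : ℂ, c = d → c • (Finsupp.single (x :: a) b : Sp)
          = d • Finsupp.single (x :: a) b := by intro c d h; rw [h]
      rw [smul_smul]
      apply this
      cases x <;> simp [List.count_cons, pow_succ] <;> ring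

lemma annVecL_append (i j : Bool) (w : Str) :
    annVecL Q i (w ++ [j])
      = Finsupp.mapDomain (fun t => t ++ [j]) (annVecL Q i w)
        + (if j = i then ((w.map (Q i)).prod) • Finsupp.single w (1 : ℂ) else 0) := by
  induction w with
  | nil => simp [annVecL]
  | cons x w ih =>
      show annVecL Q i (x :: (w ++ [j])) = _
      rw [annVecL, ih, annVecL, List.map_cons, List.prod_cons,
        Finsupp.mapDomain_add]
      split_ifs with h1 h2 h2 <;>
        simp only [Finsupp.mapDomain_add, Finsupp.mapDomain_smul,
          Finsupp.mapDomain_single, Finsupp.mapDomain_zero, mapDomain_comm,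
          smul_zero, add_zero, zero_add, smul_add] <;> module

lemma scaleW (i j : Bool) (t : Str) :
    Q j i • Wgen (Q j false) (Q j true) (annVecL Q i t)
      = ((t.map (Q j)).prod) • annVecL Q i t := by
  induction t with
  | nil => simp [annVecL]
  | cons x t ih =>
      rw [annVecL]
      rw [map_add, map_smul, Wgen_mapDomain, smul_add]
      have hc : (cond x (Q j true) (Q j false)) = Q j x := by cases x <;> rfl
      rw [hc]
      have key : Q j i • Q i x • Q j x •
            Finsupp.mapDomain (List.cons x) (Wgen (Q j false) (Q j true) (annVecL Q i t))
          = (Q j x * (t.map (Q j)).prod) •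
            (Q i x • Finsupp.mapDomain (List.cons x) (annVecL Q i t)) := by
        rw [smul_comm (Q j i), smul_comm (Q j i), ← Finsupp.mapDomain_smul, ih,
          Finsupp.mapDomain_smul]
        module
      rw [List.map_cons, List.prod_cons]
      split_ifs with h
      · subst h
        rw [Wgen_single, smul_add, key, prod_count]
        module
      · simp only [map_zero, smul_zero, zero_add, smul_add]
        exact key

lemma annLR (i j : Bool) (hsym : Q i j = Q j i) (w : Str) :
    annL Q i (annVecR Q j w) = annR Q j (annVecL Q i w) := by
  induction w with
  | nil => simp [annVecR, annVecL]
  | cons x w ih =>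
      rw [annVecR, annVecL, map_add, map_add, map_smul,
        annL_mapDomain, annR_mapDomain, ih]
      split_ifs with h1 h2 h2 <;>
        simp only [map_smul, map_zero, annL_single, annR_single, one_smul,
          smul_zero, zero_add, add_zero, smul_add]
      · rw [h1, hsym, scaleW]; abel
      · rw [h1, hsym, scaleW]

lemma key_comm (i j : Bool) (hsym : Q i j = Q j i) (w : Str) :
    HL Q i (HR Q j (Finsupp.single w (1 : ℂ)))
      = HR Q j (HL Q i (Finsupp.single w (1 : ℂ))) := by
  have hR : HR Q j (Finsupp.single w (1 : ℂ))
      = annVecR Q j w + Finsupp.single (w ++ [j]) (1 : ℂ) := by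
    simp [HR, annR_single, creR]
  have hL : HL Q i (Finsupp.single w (1 : ℂ))
      = annVecL Q i w + Finsupp.single (i :: w) (1 : ℂ) := by
    simp [HL, annL_single, creL]
  rw [hR, hL, map_add, map_add]
  have e1 : HL Q i (annVecR Q j w)
      = annL Q i (annVecR Q j w) + Finsupp.mapDomain (List.cons i) (annVecR Q j w) := by
    simp [HL, creL_eq]
  have e2 : HL Q i (Finsupp.single (w ++ [j]) (1 : ℂ))
      = annVecL Q i (w ++ [j]) + Finsupp.single (i :: (w ++ [j])) (1 : ℂ) := by
    simp [HL, annL_single, creL]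
  have e3 : HR Q j (annVecL Q i w)
      = annR Q j (annVecL Q i w)
        + Finsupp.mapDomain (fun t => t ++ [j]) (annVecL Q i w) := by
    simp [HR, creR_eq]
  have e4 : HR Q j (Finsupp.single (i :: w) (1 : ℂ))
      = annVecR Q j (i :: w) + Finsupp.single ((i :: w) ++ [j]) (1 : ℂ) := by
    simp [HR, annR_single, creR]
  rw [e1, e2, e3, e4, annVecL_append, annLR Q i j hsym w]
  rw [show annVecR Q j (i :: w)
      = (if i = j then ((w.map (Q j)).prod) • Finsupp.single w (1 : ℂ) else 0)
        + Finsupp.mapDomain (List.cons i) (annVecR Q j w) by rw [annVecR]]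
  have hite : (if j = i then ((w.map (Q i)).prod) • Finsupp.single w (1 : ℂ) else 0)
      = (if i = j then ((w.map (Q j)).prod) • Finsupp.single w (1 : ℂ) else 0) := by
    rcases eq_or_ne i j with h | h
    · subst h; simp
    · rw [if_neg h, if_neg (Ne.symm h)]
  rw [hite]
  have : (i :: (w ++ [j])) = ((i :: w) ++ [j]) := rfl
  rw [this]
  abel

end Aux

end DSSYK

open DSSYK in
/-- the left and right boundary Hamiltonians commute:
`H_{L,i} ∘ H_{R,j} = H_{R,j} ∘ H_{L,i}` for all `i, j ∈ {0,1}`. -/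
theorem stmt_6 (q qm r : ℝ) (i j : Bool) :
    HL (Qmat q qm r) i ∘ₗ HR (Qmat q qm r) j
      = HR (Qmat q qm r) j ∘ₗ HL (Qmat q qm r) i := by
  have hsym : Qmat q qm r i j = Qmat q qm r j i := by
    cases i <;> cases j <;> rfl
  apply Finsupp.lhom_ext
  intro a b
  have hb : (Finsupp.single a b : Sp) = b • Finsupp.single a (1 : ℂ) := by
    simp [Finsupp.smul_single]
  simp only [LinearMap.comp_apply, hb, map_smul]
  rw [key_comm (Qmat q qm r) i j hsym a]
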